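/- For any modulus n ≥ 2 and a ∈ ℤ/nℤ, the map assigning to a Young diagram Y with d diagonal boxes the colored F-partition whose top row vectors record the color counts of the i-th row segment below and including the main diagonal, and whose bottom row vectors record the color counts of the i-th column segment strictly above the main diagonal (colors given by the diagonal a-coloring), is injective, and the column sums of the resulting colored F-partition equal the weight vector (wt_c(a,Y))_{c∈ℤ/nℤ}. -/

import Mathlib

/-- The number of boxes on the main diagonal of a Young diagram. -/
def diagLen (Y : YoungDiagram) : ℕ := (Y.cells.filter fun s => s.1 = s.2).card

lemma diag_mem_iff (Y : YoungDiagram) (i : ℕ) : (i, i) ∈ Y ↔ i < diagLen Y := by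
  have hinj : Function.Injective (fun k : ℕ => (k, k)) := by
    intro a b h; simpa using (Prod.mk.injEq a a b b ▸ h : (a,a) = (b,b))
  constructor
  · intro h
    have hsub : (Finset.range (i+1)).image (fun k => (k, k)) ⊆
        Y.cells.filter fun s => s.1 = s.2 := by
      intro s hs
      simp only [Finset.mem_image, Finset.mem_range] at hs
      obtain ⟨k, hk, rfl⟩ := hs
      simp only [Finset.mem_filter, YoungDiagram.mem_cells]
      exact ⟨Y.up_left_mem (Nat.lt_succ_iff.mp hk) (Nat.lt_succ_iff.mp hk) h, trivial⟩
    have := Finset.card_le_card hsub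
    rw [Finset.card_image_of_injective _ hinj, Finset.card_range] at this
    unfold diagLen
    omega
  · intro h
    by_contra hmem
    have hsub : (Y.cells.filter fun s => s.1 = s.2) ⊆
        (Finset.range i).image (fun k => (k, k)) := by
      intro s hs
      simp only [Finset.mem_filter, YoungDiagram.mem_cells] at hs
      obtain ⟨hmem', heq⟩ := hs
      obtain ⟨k, l⟩ := s
      simp only at heq
      subst heq
      simp only [Finset.mem_image, Finset.mem_range]
      refine ⟨k, ?_, rfl⟩
      by_contra hk
      exact hmem (Y.up_left_mem (Nat.le_of_not_lt hk) (Nat.le_of_not_lt hk) hmem')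
    have := Finset.card_le_card hsub
    rw [Finset.card_image_of_injective _ hinj, Finset.card_range] at this
    unfold diagLen at h
    omega

lemma arm_card (Y : YoungDiagram) (i : ℕ) :
    (Y.cells.filter fun s => s.1 = i ∧ i ≤ s.2).card = Y.rowLen i - i := by
  have : (Y.cells.filter fun s => s.1 = i ∧ i ≤ s.2) =
      (Finset.Ico i (Y.rowLen i)).image (fun j => (i, j)) := by
    ext ⟨r, j⟩
    simp only [Finset.mem_filter, YoungDiagram.mem_cells, Finset.mem_image, Finset.mem_Ico,
      Prod.mk.injEq]
    constructor
    · rintro ⟨hj, rfl, hij⟩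
      rw [YoungDiagram.mem_iff_lt_rowLen] at hj
      exact ⟨j, ⟨hij, hj⟩, rfl, rfl⟩
    · rintro ⟨k, ⟨hik, hk⟩, rfl, rfl⟩
      exact ⟨YoungDiagram.mem_iff_lt_rowLen.mpr hk, rfl, hik⟩
  rw [this, Finset.card_image_of_injective, Nat.card_Ico]
  intro a b h; simpa using h

lemma leg_card (Y : YoungDiagram) (j : ℕ) :
    (Y.cells.filter fun s => s.2 = j ∧ j < s.1).card = Y.colLen j - (j+1) := by
  have : (Y.cells.filter fun s => s.2 = j ∧ j < s.1) =
      (Finset.Ico (j+1) (Y.colLen j)).image (fun r => (r, j)) := by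
    ext ⟨r, l⟩
    simp only [Finset.mem_filter, YoungDiagram.mem_cells, Finset.mem_image, Finset.mem_Ico,
      Prod.mk.injEq]
    constructor
    · rintro ⟨hr, rfl, hjr⟩
      rw [YoungDiagram.mem_iff_lt_colLen] at hr
      exact ⟨r, ⟨hjr, hr⟩, rfl, rfl⟩
    · rintro ⟨k, ⟨hjk, hk⟩, rfl, rfl⟩
      exact ⟨YoungDiagram.mem_iff_lt_colLen.mpr hk, rfl, hjk⟩
  rw [this, Finset.card_image_of_injective, Nat.card_Ico]
  intro a b h; simpa using h

/-- The color-count vector of the `i`-th row segment below and including the main diagonal: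
for each color `c`, the number of boxes `(i,j)` of `Y` with `j ≥ i` whose diagonal
`a`-coloring color `a - i + j` equals `c`. -/
def topVec (n : ℕ) (a : ZMod n) (Y : YoungDiagram) (i : ℕ) : ZMod n → ℕ :=
  fun c => (Y.cells.filter fun s =>
    s.1 = i ∧ i ≤ s.2 ∧ a - (s.1 : ZMod n) + (s.2 : ZMod n) = c).card

/-- The color-count vector of the `i`-th column segment strictly above the main diagonal. -/
def botVec (n : ℕ) (a : ZMod n) (Y : YoungDiagram) (i : ℕ) : ZMod n → ℕ :=
  fun c => (Y.cells.filter fun s =>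
    s.2 = i ∧ i < s.1 ∧ a - (s.1 : ZMod n) + (s.2 : ZMod n) = c).card

lemma top_sum (n : ℕ) [NeZero n] (a : ZMod n) (Y : YoungDiagram) (i : ℕ) :
    ∑ c : ZMod n, topVec n a Y i c = (Y.cells.filter fun s => s.1 = i ∧ i ≤ s.2).card := by
  rw [Finset.card_eq_sum_card_fiberwise
    (f := fun s : ℕ × ℕ => a - (s.1 : ZMod n) + (s.2 : ZMod n)) (t := Finset.univ)
    (fun x _ => Finset.mem_univ _)]
  apply Finset.sum_congr rfl
  intro c _
  unfold topVec
  rw [Finset.filter_filter]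
  congr 1
  ext s
  simp only [Finset.mem_filter]
  tauto

lemma bot_sum (n : ℕ) [NeZero n] (a : ZMod n) (Y : YoungDiagram) (i : ℕ) :
    ∑ c : ZMod n, botVec n a Y i c = (Y.cells.filter fun s => s.2 = i ∧ i < s.1).card := by
  rw [Finset.card_eq_sum_card_fiberwise
    (f := fun s : ℕ × ℕ => a - (s.1 : ZMod n) + (s.2 : ZMod n)) (t := Finset.univ)
    (fun x _ => Finset.mem_univ _)]
  apply Finset.sum_congr rfl
  intro c _
  unfold botVec
  rw [Finset.filter_filter]
  congr 1
  ext s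
  simp only [Finset.mem_filter]
  tauto

lemma mem_iff_cards (Y : YoungDiagram) (i j : ℕ) :
    (i, j) ∈ Y ↔ (i ≤ j ∧ j - i < (Y.cells.filter fun s => s.1 = i ∧ i ≤ s.2).card) ∨
      (j < i ∧ i - j ≤ (Y.cells.filter fun s => s.2 = j ∧ j < s.1).card) := by
  rw [arm_card, leg_card]
  rcases le_or_gt i j with h | h
  · rw [YoungDiagram.mem_iff_lt_rowLen]; omega
  · rw [YoungDiagram.mem_iff_lt_colLen]; omega
lemma top_range_sum (n : ℕ) [NeZero n] (a : ZMod n) (Y : YoungDiagram) (c : ZMod n) :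
    ∑ i ∈ Finset.range (diagLen Y), topVec n a Y i c =
      ((Y.cells.filter fun s => a - (s.1 : ZMod n) + (s.2 : ZMod n) = c).filter
        fun s => s.1 ≤ s.2).card := by
  rw [Finset.card_eq_sum_card_fiberwise (f := Prod.fst) (t := Finset.range (diagLen Y))]
  · apply Finset.sum_congr rfl
    intro i _
    unfold topVec
    rw [Finset.filter_filter, Finset.filter_filter]
    congr 1
    ext ⟨r, j⟩
    simp only [Finset.mem_filter, YoungDiagram.mem_cells]
    constructor
    · rintro ⟨hm, rfl, hle, hcol⟩
      exact ⟨hm, hcol, hle, rfl⟩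
    · rintro ⟨hm, hcol, hle, rfl⟩
      exact ⟨hm, rfl, hle, hcol⟩
  · rintro ⟨r, j⟩ hs
    simp only [Finset.mem_coe, Finset.mem_filter, YoungDiagram.mem_cells] at hs
    obtain ⟨⟨hm, _⟩, hle⟩ := hs
    rw [Finset.mem_coe, Finset.mem_range, ← diag_mem_iff]
    exact Y.up_left_mem le_rfl hle hm

lemma bot_range_sum (n : ℕ) [NeZero n] (a : ZMod n) (Y : YoungDiagram) (c : ZMod n) :
    ∑ i ∈ Finset.range (diagLen Y), botVec n a Y i c =
      ((Y.cells.filter fun s => a - (s.1 : ZMod n) + (s.2 : ZMod n) = c).filter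
        fun s => ¬ s.1 ≤ s.2).card := by
  rw [Finset.card_eq_sum_card_fiberwise (f := Prod.snd) (t := Finset.range (diagLen Y))]
  · apply Finset.sum_congr rfl
    intro i _
    unfold botVec
    rw [Finset.filter_filter, Finset.filter_filter]
    congr 1
    ext ⟨r, j⟩
    simp only [Finset.mem_filter, YoungDiagram.mem_cells, not_le]
    constructor
    · rintro ⟨hm, rfl, hlt, hrow⟩
      exact ⟨hm, hrow, hlt, rfl⟩
    · rintro ⟨hm, hrow, hlt, rfl⟩
      exact ⟨hm, rfl, hlt, hrow⟩
  · rintro ⟨r, j⟩ hs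
    simp only [Finset.mem_coe, Finset.mem_filter, YoungDiagram.mem_cells, not_le] at hs
    obtain ⟨⟨hm, _⟩, hlt⟩ := hs
    rw [Finset.mem_coe, Finset.mem_range, ← diag_mem_iff]
    exact Y.up_left_mem (le_of_lt hlt) le_rfl hm

/-- The colored F-partition associated to a diagonally `a`-colored Young diagram: the top row
records the color counts of the hook arms (row segments from the diagonal), the bottom row
the color counts of the hook legs (column segments strictly beyond the diagonal). -/
def frobColored (n : ℕ) (a : ZMod n) (Y : YoungDiagram) :
    List (ZMod n → ℕ) × List (ZMod n → ℕ) :=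
  ((List.range (diagLen Y)).map (topVec n a Y), (List.range (diagLen Y)).map (botVec n a Y))

/-- The map `Y ↦` colored F-partition is injective, and the column sums of the resulting
colored F-partition equal the weight vector `(wt_c(a,Y))_c`. -/
theorem frobColored_injective_and_columnSums (n : ℕ) [NeZero n] (hn : 2 ≤ n) (a : ZMod n) :
    Function.Injective (frobColored n a) ∧
    ∀ (Y : YoungDiagram) (c : ZMod n),
      ((frobColored n a Y).1.map fun v => v c).sum +
        ((frobColored n a Y).2.map fun v => v c).sum =
      (Y.cells.filter fun s => a - (s.1 : ZMod n) + (s.2 : ZMod n) = c).card := by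
  constructor
  · intro Y1 Y2 h
    have hd : diagLen Y1 = diagLen Y2 := by
      have := congrArg (fun p : List (ZMod n → ℕ) × List (ZMod n → ℕ) => p.1.length) h
      simpa [frobColored] using this
    have h1 := congrArg Prod.fst h
    have h2 := congrArg Prod.snd h
    simp only [frobColored, ← hd] at h1 h2
    rw [List.map_eq_map_iff] at h1 h2
    have harm : ∀ i, (Y1.cells.filter fun s => s.1 = i ∧ i ≤ s.2).card =
        (Y2.cells.filter fun s => s.1 = i ∧ i ≤ s.2).card := by
      intro i
      by_cases hi : i < diagLen Y1
      · have ht : topVec n a Y1 i = topVec n a Y2 i := h1 i (List.mem_range.mpr hi)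
        rw [← top_sum n a Y1 i, ← top_sum n a Y2 i, ht]
      · have z1 : Y1.rowLen i ≤ i := by
          by_contra hz
          exact hi ((diag_mem_iff Y1 i).mp (YoungDiagram.mem_iff_lt_rowLen.mpr (by omega)))
        have z2 : Y2.rowLen i ≤ i := by
          by_contra hz
          refine hi ?_
          rw [hd]
          exact (diag_mem_iff Y2 i).mp (YoungDiagram.mem_iff_lt_rowLen.mpr (by omega))
        rw [arm_card, arm_card]
        omega
    have hleg : ∀ i, (Y1.cells.filter fun s => s.2 = i ∧ i < s.1).card =
        (Y2.cells.filter fun s => s.2 = i ∧ i < s.1).card := by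
      intro i
      by_cases hi : i < diagLen Y1
      · have ht : botVec n a Y1 i = botVec n a Y2 i := h2 i (List.mem_range.mpr hi)
        rw [← bot_sum n a Y1 i, ← bot_sum n a Y2 i, ht]
      · have z1 : Y1.colLen i ≤ i + 1 := by
          by_contra hz
          exact hi ((diag_mem_iff Y1 i).mp (YoungDiagram.mem_iff_lt_colLen.mpr (by omega)))
        have z2 : Y2.colLen i ≤ i + 1 := by
          by_contra hz
          refine hi ?_
          rw [hd]
          exact (diag_mem_iff Y2 i).mp (YoungDiagram.mem_iff_lt_colLen.mpr (by omega))
        rw [leg_card, leg_card]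
        omega
    apply SetLike.ext
    rintro ⟨i, j⟩
    rw [mem_iff_cards, mem_iff_cards, harm i, hleg j]
  · intro Y c
    have e1 : ((frobColored n a Y).1.map fun v => v c).sum =
        ∑ i ∈ Finset.range (diagLen Y), topVec n a Y i c := by
      simp only [frobColored, List.map_map]
      rfl
    have e2 : ((frobColored n a Y).2.map fun v => v c).sum =
        ∑ i ∈ Finset.range (diagLen Y), botVec n a Y i c := by
      simp only [frobColored, List.map_map]
      rfl
    rw [e1, e2, top_range_sum, bot_range_sum]
    exact Finset.card_filter_add_card_filter_not _
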